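/- Let a ∈ (0,1) and let Θ be a nonconstant inner function. If the model space (ΘH²)^⊥ is C_{φ_a}-invariant, then Θ(z₁) ≠ 0 for every z₁ ∈ 𝔻 with z₁ ≠ 0. -/

import Mathlib

open Complex MeasureTheory Metric Set Filter Topology

noncomputable section

/-- `n`-th Taylor coefficient of `f` at `0`. -/
def H2coeff (f : ℂ → ℂ) (n : ℕ) : ℂ := iteratedDeriv n f 0 / n.factorial

/-- Membership in the Hardy space `H²` of the unit disk, in coefficient form. -/
def MemH2 (f : ℂ → ℂ) : Prop :=
  DifferentiableOn ℂ f (ball (0 : ℂ) 1) ∧ Summable fun n => ‖H2coeff f n‖ ^ 2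

/-- The `H²` inner product (conjugate-linear in the first variable). -/
def H2inner (f g : ℂ → ℂ) : ℂ :=
  ∑' n : ℕ, (starRingEnd ℂ) (H2coeff f n) * H2coeff g n

/-- The `H²` distance between two functions. -/
def H2dist (f g : ℂ → ℂ) : ℝ := Real.sqrt (∑' n : ℕ, ‖H2coeff f n - H2coeff g n‖ ^ 2)

/-- The affine self-map `φ_a(z) = a z + 1 - a` of the unit disk. -/
def phiA (a : ℝ) : ℂ → ℂ := fun z => (a : ℂ) * z + 1 - (a : ℂ)

/-- The composition operator `C_φ f = f ∘ φ`. -/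
def compOp (φ : ℂ → ℂ) (f : ℂ → ℂ) : ℂ → ℂ := f ∘ φ

/-- A set of functions is invariant under an operator. -/
def InvariantUnderOp (T : (ℂ → ℂ) → (ℂ → ℂ)) (M : Set (ℂ → ℂ)) : Prop :=
  ∀ f ∈ M, T f ∈ M

/-- `f` has radial limit `L` at the boundary point `e^{iθ}`. -/
def RadialLimit (f : ℂ → ℂ) (θ : ℝ) (L : ℂ) : Prop :=
  Tendsto (fun r : ℝ => f ((r : ℂ) * Complex.exp ((θ : ℂ) * Complex.I))) (𝓝[<] (1 : ℝ)) (𝓝 L)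

/-- An inner function: a member of `H²` with unimodular radial limits a.e. -/
def IsInnerFn (Θ : ℂ → ℂ) : Prop :=
  MemH2 Θ ∧ ∀ᵐ θ : ℝ, ∃ L : ℂ, RadialLimit Θ θ L ∧ ‖L‖ = 1

/-- `Θ` is nonconstant on the unit disk. -/
def NonconstantOnDisk (Θ : ℂ → ℂ) : Prop :=
  ∃ z ∈ ball (0 : ℂ) 1, ∃ w ∈ ball (0 : ℂ) 1, Θ z ≠ Θ w

/-- The Beurling subspace `Θ H²`. -/
def BeurlingSpace (Θ : ℂ → ℂ) : Set (ℂ → ℂ) :=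
  {f | MemH2 f ∧ ∃ g, MemH2 g ∧ EqOn f (fun z => Θ z * g z) (ball (0 : ℂ) 1)}

/-- The model space `(Θ H²)^⊥`, the orthogonal complement of `Θ H²` in `H²`. -/
def ModelSpace (Θ : ℂ → ℂ) : Set (ℂ → ℂ) :=
  {f | MemH2 f ∧ ∀ g, MemH2 g → H2inner (fun z => Θ z * g z) f = 0}

/-- The singular inner function associated to a measure `μ` on the circle,
parametrized by the angle in `(0, 2π]`. -/
def singularInnerFun (μ : Measure ℝ) : ℂ → ℂ := fun z =>
  Complex.exp (-∫ t, (Complex.exp ((t : ℂ) * Complex.I) + z) /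
    (Complex.exp ((t : ℂ) * Complex.I) - z) ∂μ)

/-- `μ` is a finite positive Borel measure on the circle (parametrized by `(0, 2π]`)
which is singular with respect to Lebesgue measure. -/
def IsSingularMeasure (μ : Measure ℝ) : Prop :=
  IsFiniteMeasure μ ∧ μ (Set.Ioc 0 (2 * Real.pi))ᶜ = 0 ∧ μ.MutuallySingular volume

/-- A single Blaschke factor with zero `w` (with the convention that a zero at the
origin contributes the factor `z`). -/
def blaschkeFactor (w : ℂ) : ℂ → ℂ := fun z =>
  if w = 0 then z
  else ((starRingEnd ℂ) w / (‖w‖ : ℂ)) * ((w - z) / (1 - (starRingEnd ℂ) w * z))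

/-- The Blaschke product with zero sequence `zs`. -/
def blaschkeProd {ι : Type} (zs : ι → ℂ) : ℂ → ℂ := fun z => ∏' i, blaschkeFactor (zs i) z

/-- Regular points of an inner function `Θ`: points of the open disk where `Θ` does not
vanish, and boundary points across which `Θ` extends analytically with unimodular values
on the circle. -/
def RegularPoint (Θ : ℂ → ℂ) (z : ℂ) : Prop :=
  (z ∈ ball (0 : ℂ) 1 ∧ Θ z ≠ 0) ∨
  (‖z‖ = 1 ∧ ∃ (V : Set ℂ) (g : ℂ → ℂ), IsOpen V ∧ z ∈ V ∧
    DifferentiableOn ℂ g V ∧ EqOn g Θ (V ∩ ball (0 : ℂ) 1) ∧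
    ∀ w ∈ V, ‖w‖ = 1 → ‖g w‖ = 1)

/-- The spectrum `σ(Θ)` of an inner function: the complement in the closed disk of the
set of regular points. -/
def innerSpectrum (Θ : ℂ → ℂ) : Set ℂ :=
  {z ∈ closedBall (0 : ℂ) 1 | ¬ RegularPoint Θ z}

/-- Closure of a set of functions in the `H²` metric. -/
def H2Closure (M : Set (ℂ → ℂ)) : Set (ℂ → ℂ) :=
  {g | MemH2 g ∧ ∀ ε > (0 : ℝ), ∃ f ∈ M, H2dist g f < ε}

/-- A closed linear subspace of `H²`. -/
def IsClosedSubspaceH2 (M : Set (ℂ → ℂ)) : Prop :=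
  (∀ f ∈ M, MemH2 f) ∧ (0 : ℂ → ℂ) ∈ M ∧
  (∀ f ∈ M, ∀ g ∈ M, f + g ∈ M) ∧ (∀ c : ℂ, ∀ f ∈ M, c • f ∈ M) ∧
  H2Closure M ⊆ M

/-- `M` contains a function not vanishing identically on the disk. -/
def NontrivialH2 (M : Set (ℂ → ℂ)) : Prop := ∃ f ∈ M, ∃ z ∈ ball (0 : ℂ) 1, f z ≠ 0

/-- A minimal (nonzero, closed) invariant subspace for the composition operator `C_φ`:
it contains no nonzero proper closed `C_φ`-invariant subspace. -/
def IsMinimalInvariant (φ : ℂ → ℂ) (M : Set (ℂ → ℂ)) : Prop :=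
  IsClosedSubspaceH2 M ∧ InvariantUnderOp (compOp φ) M ∧ NontrivialH2 M ∧
  ∀ N : Set (ℂ → ℂ), IsClosedSubspaceH2 N → InvariantUnderOp (compOp φ) N →
    NontrivialH2 N → N ⊆ M → N = M

/-- The closed cyclic invariant subspace `K_f` generated by `f` under `C_φ`. -/
def cyclicSubspace (φ : ℂ → ℂ) (f : ℂ → ℂ) : Set (ℂ → ℂ) :=
  H2Closure (Submodule.span ℂ {h : ℂ → ℂ | ∃ n : ℕ, h = fun z => f (φ^[n] z)} : Set (ℂ → ℂ))

/-- The Cesàro operator on `H²`. -/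
def CesaroOp (f : ℂ → ℂ) : ℂ → ℂ := fun z =>
  ∑' n : ℕ, (((n : ℂ) + 1)⁻¹ * ∑ k ∈ Finset.range (n + 1), H2coeff f k) * z ^ n

/-- The space of (restrictions to the disk of) polynomials of degree at most `N`. -/
def PolySpace (N : ℕ) : Set (ℂ → ℂ) :=
  {f | DifferentiableOn ℂ f (ball (0 : ℂ) 1) ∧
    ∃ p : Polynomial ℂ, p.natDegree ≤ N ∧ ∀ z ∈ ball (0 : ℂ) 1, f z = Polynomial.eval z p}

/-- The subspace `zⁿ (Θ H²)^⊥` of `H²`. -/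
def shiftedModel (n : ℕ) (Θ : ℂ → ℂ) : Set (ℂ → ℂ) :=
  {f | MemH2 f ∧ ∃ g ∈ ModelSpace Θ, ∀ z ∈ ball (0 : ℂ) 1, f z = z ^ n * g z}
def nnr (v : ℂ) : NNReal := ⟨(1 + ‖v‖)⁻¹, by positivity⟩

lemma one_sub_ne_zero' {u : ℂ} (h : ‖u‖ < 1) : (1:ℂ) - u ≠ 0 := by
  have : u ≠ 1 := by rintro rfl; simp at h
  exact sub_ne_zero.mpr (Ne.symm this)

lemma hasFPS_geom (c v : ℂ) :
    HasFPowerSeriesOnBall (fun z => c * (1 - v * z)⁻¹)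
      (FormalMultilinearSeries.ofScalars ℂ (fun n => c * v ^ n)) 0
      ((nnr v : NNReal) : ENNReal) := by
  have hvpos : (0:ℝ) < 1 + ‖v‖ := by positivity
  refine ⟨?_, ?_, ?_⟩
  · apply FormalMultilinearSeries.le_radius_of_bound _ ‖c‖
    intro n
    rw [FormalMultilinearSeries.ofScalars_norm]
    have h1 : ‖c * v ^ n‖ * ((1 + ‖v‖)⁻¹ : ℝ) ^ n = ‖c‖ * (‖v‖ * (1 + ‖v‖)⁻¹) ^ n := by
      rw [norm_mul, norm_pow, mul_pow]; ring
    calc ‖c * v ^ n‖ * ((nnr v : NNReal) : ℝ) ^ n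
        = ‖c‖ * (‖v‖ * (1 + ‖v‖)⁻¹) ^ n := h1
      _ ≤ ‖c‖ * 1 := by
          gcongr
          apply pow_le_one₀ (by positivity)
          rw [← div_eq_mul_inv]
          exact (div_le_one hvpos).mpr (by linarith)
      _ = ‖c‖ := mul_one _
  · exact_mod_cast (show (0:ℝ) < (1 + ‖v‖)⁻¹ by positivity)
  · intro y hy
    have hy' : ‖y‖ < (1 + ‖v‖)⁻¹ := by
      rw [EMetric.mem_ball, edist_zero_right, enorm_eq_nnnorm, ENNReal.coe_lt_coe] at hy
      exact_mod_cast hy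
    have hvy : ‖v * y‖ < 1 := by
      calc ‖v * y‖ = ‖v‖ * ‖y‖ := norm_mul _ _
        _ ≤ ‖v‖ * (1 + ‖v‖)⁻¹ := by
            apply mul_le_mul_of_nonneg_left hy'.le (norm_nonneg v)
        _ < 1 := by
            rw [← div_eq_mul_inv]
            exact (div_lt_one hvpos).mpr (by linarith)
    have hgs := (hasSum_geometric_of_norm_lt_one hvy).mul_left c
    have heq : (fun n => FormalMultilinearSeries.ofScalars ℂ (fun n => c * v ^ n) n fun _ => y)
        = fun n => c * (v * y) ^ n := by
      funext n
      rw [FormalMultilinearSeries.ofScalars_apply_eq]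
      simp [smul_eq_mul, mul_pow]; ring
    rw [heq, zero_add]
    exact hgs

lemma H2coeff_eq_coeff {f : ℂ → ℂ} {p : FormalMultilinearSeries ℂ ℂ ℂ} {r : ENNReal}
    (h : HasFPowerSeriesOnBall f p 0 r) (n : ℕ) : H2coeff f n = p.coeff n := by
  have h1 := h.factorial_smul (1 : ℂ) n
  rw [FormalMultilinearSeries.apply_eq_pow_smul_coeff, one_pow, one_smul] at h1
  have hfac : ((n.factorial : ℂ)) ≠ 0 := Nat.cast_ne_zero.mpr n.factorial_ne_zero
  rw [H2coeff, iteratedDeriv_eq_iteratedFDeriv, ← h1, nsmul_eq_mul]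
  field_simp

lemma H2coeff_mul_geom (c v : ℂ) (n : ℕ) :
    H2coeff (fun z => c * (1 - v * z)⁻¹) n = c * v ^ n := by
  rw [H2coeff_eq_coeff (hasFPS_geom c v) n]
  have h1 := FormalMultilinearSeries.apply_eq_pow_smul_coeff
    (p := FormalMultilinearSeries.ofScalars ℂ (fun n => c * v ^ n)) (z := (1:ℂ)) (n := n)
  have h2 := FormalMultilinearSeries.ofScalars_apply_eq
    (E := ℂ) (c := fun n => c * v ^ n) (1:ℂ) n
  simp only [one_pow, one_smul, smul_eq_mul, mul_one] at h1 h2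
  rw [one_mul] at h1
  rw [← h1, h2]

lemma H2coeff_geom (v : ℂ) (n : ℕ) :
    H2coeff (fun z => (1 - v * z)⁻¹) n = v ^ n := by
  have h := H2coeff_mul_geom 1 v n
  simp only [one_mul] at h
  exact h

lemma hasSum_H2coeff {f : ℂ → ℂ} (hf : DifferentiableOn ℂ f (ball (0:ℂ) 1))
    {w : ℂ} (hw : w ∈ ball (0:ℂ) 1) :
    HasSum (fun n => H2coeff f n * w ^ n) (f w) := by
  have h := Complex.hasSum_taylorSeries_on_ball hf hw
  have heq : (fun n : ℕ => (n.factorial : ℂ)⁻¹ • (w - 0) ^ n • iteratedDeriv n f 0)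
      = fun n => H2coeff f n * w ^ n := by
    funext n
    have hfac : ((n.factorial : ℂ)) ≠ 0 := Nat.cast_ne_zero.mpr n.factorial_ne_zero
    rw [sub_zero, smul_eq_mul, smul_eq_mul, H2coeff]
    field_simp
  rw [← heq]
  exact h

lemma hasSum_conj' {f : ℕ → ℂ} {s : ℂ} (h : HasSum f s) :
    HasSum (fun n => (starRingEnd ℂ) (f n)) ((starRingEnd ℂ) s) :=
  h.map (starRingEnd ℂ).toAddMonoidHom Complex.continuous_conj

lemma norm_lt_one_of_mem_ball {z : ℂ} (h : z ∈ ball (0:ℂ) 1) : ‖z‖ < 1 :=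
  mem_ball_zero_iff.mp h

lemma diffOn_K {v : ℂ} (hv : ‖v‖ < 1) :
    DifferentiableOn ℂ (fun z => (1 - v * z)⁻¹) (ball (0:ℂ) 1) := by
  apply DifferentiableOn.inv
  · fun_prop
  · intro z hz
    have hz' := norm_lt_one_of_mem_ball hz
    apply one_sub_ne_zero'
    rw [norm_mul]
    nlinarith [norm_nonneg v, norm_nonneg z]

lemma memH2_K {w : ℂ} (hw : w ∈ ball (0:ℂ) 1) :
    MemH2 (fun z => (1 - (starRingEnd ℂ) w * z)⁻¹) := by
  have hwn := norm_lt_one_of_mem_ball hw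
  have hcn : ‖(starRingEnd ℂ) w‖ < 1 := by rwa [RCLike.norm_conj]
  refine ⟨diffOn_K hcn, ?_⟩
  have heq : ∀ n : ℕ, ‖H2coeff (fun z => (1 - (starRingEnd ℂ) w * z)⁻¹) n‖ ^ 2
      = (‖w‖ ^ 2) ^ n := by
    intro n
    rw [H2coeff_geom, norm_pow, RCLike.norm_conj, ← pow_mul, ← pow_mul, Nat.mul_comm]
  apply Summable.congr (f := fun n : ℕ => (‖w‖ ^ 2) ^ n)
  · exact summable_geometric_of_lt_one (by positivity) (by nlinarith [norm_nonneg w])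
  · exact fun n => (heq n).symm

lemma memH2_one : MemH2 (fun _ : ℂ => (1:ℂ)) := by
  have hfun : (fun _ : ℂ => (1:ℂ)) = fun z : ℂ => (1 - 0 * z)⁻¹ := by
    funext z; simp
  refine ⟨differentiableOn_const 1, ?_⟩
  rw [hfun]
  apply summable_of_ne_finset_zero (s := {0})
  intro n hn
  rw [H2coeff_geom, zero_pow (by simpa using hn)]
  simp

lemma kernel_mem {Θ : ℂ → ℂ} (hΘd : DifferentiableOn ℂ Θ (ball (0:ℂ) 1))
    {w : ℂ} (hw : w ∈ ball (0:ℂ) 1) (h0 : Θ w = 0) :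
    (fun z => (1 - (starRingEnd ℂ) w * z)⁻¹) ∈ ModelSpace Θ := by
  refine ⟨memH2_K hw, fun g hg => ?_⟩
  have hd : DifferentiableOn ℂ (fun z => Θ z * g z) (ball (0:ℂ) 1) := hΘd.mul hg.1
  have hs := hasSum_H2coeff hd hw
  simp only [h0, zero_mul] at hs
  have hc := hasSum_conj' hs
  rw [map_zero] at hc
  rw [H2inner, show (fun n => (starRingEnd ℂ) (H2coeff (fun z => Θ z * g z) n)
      * H2coeff (fun z => (1 - (starRingEnd ℂ) w * z)⁻¹) n)
      = fun n => (starRingEnd ℂ) (H2coeff (fun z => Θ z * g z) n * w ^ n) from ?_]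
  · exact hc.tsum_eq
  · funext n; rw [H2coeff_geom, map_mul, map_pow]

lemma force_zero {Θ : ℂ → ℂ} (hΘd : DifferentiableOn ℂ Θ (ball (0:ℂ) 1))
    {w' : ℂ} (hw' : w' ∈ ball (0:ℂ) 1) {c : ℂ} (hc : c ≠ 0) {f : ℂ → ℂ}
    (hf : f ∈ ModelSpace Θ)
    (heq : ∀ z ∈ ball (0:ℂ) 1, f z = c * (1 - (starRingEnd ℂ) w' * z)⁻¹) :
    Θ w' = 0 := by
  have h := hf.2 (fun _ => (1:ℂ)) memH2_one
  have hball : ball (0:ℂ) 1 ∈ 𝓝 (0:ℂ) := isOpen_ball.mem_nhds (by simp)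
  have hEq : f =ᶠ[𝓝 (0:ℂ)] fun z => c * (1 - (starRingEnd ℂ) w' * z)⁻¹ :=
    Filter.eventually_of_mem hball (fun z hz => heq z hz)
  have hcoeff : ∀ n, H2coeff f n = c * ((starRingEnd ℂ) w') ^ n := by
    intro n
    rw [H2coeff, hEq.iteratedDeriv_eq n, ← H2coeff, H2coeff_mul_geom]
  have hsΘ := hasSum_H2coeff hΘd hw'
  have hc2 := (hasSum_conj' hsΘ).mul_left c
  have hmul1 : (fun z => Θ z * (fun _ => (1:ℂ)) z) = Θ := by funext z; simp
  have h2 : H2inner (fun z => Θ z * (fun _ => (1:ℂ)) z) f = c * (starRingEnd ℂ) (Θ w') := by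
    rw [H2inner, show (fun n => (starRingEnd ℂ)
        (H2coeff (fun z => Θ z * (fun _ => (1:ℂ)) z) n) * H2coeff f n)
        = fun n => c * (starRingEnd ℂ) (H2coeff Θ n * w' ^ n) from ?_]
    · exact hc2.tsum_eq
    · funext n
      rw [hcoeff n, hmul1, map_mul, map_pow]
      ring
  have hz : c * (starRingEnd ℂ) (Θ w') = 0 := h2.symm.trans h
  rcases mul_eq_zero.mp hz with h' | h'
  · exact absurd h' hc
  · simpa using h'

lemma psi_mem_ball {a : ℝ} (ha0 : 0 < a) (ha1 : a < 1) {w : ℂ} (hw : ‖w‖ < 1) :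
    ‖(a:ℂ) * w / (1 - (1 - (a:ℂ)) * w)‖ < 1 := by
  have h1a : ‖(1:ℂ) - (a:ℂ)‖ = 1 - a := by
    rw [show (1:ℂ) - (a:ℂ) = ((1 - a : ℝ) : ℂ) by push_cast; ring,
      Complex.norm_real, Real.norm_eq_abs, _root_.abs_of_nonneg (by linarith)]
  have hnum : ‖(a:ℂ) * w‖ = a * ‖w‖ := by
    rw [norm_mul, Complex.norm_real, Real.norm_eq_abs, _root_.abs_of_nonneg ha0.le]
  have hden : (1:ℝ) - (1 - a) * ‖w‖ ≤ ‖(1:ℂ) - (1 - (a:ℂ)) * w‖ := by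
    have := norm_sub_norm_le (1:ℂ) ((1 - (a:ℂ)) * w)
    rw [norm_one, norm_mul, h1a] at this
    linarith
  have hkey : a * ‖w‖ < 1 - (1 - a) * ‖w‖ := by nlinarith [norm_nonneg w]
  have hdpos : (0:ℝ) < ‖(1:ℂ) - (1 - (a:ℂ)) * w‖ := by nlinarith [norm_nonneg w]
  rw [norm_div, hnum]
  exact (div_lt_one hdpos).mpr (lt_of_lt_of_le hkey hden)

lemma phi_identity {a : ℝ} (ha0 : 0 < a) (ha1 : a < 1) {w : ℂ} (hw : ‖w‖ < 1)
    {z : ℂ} (hz : ‖z‖ < 1) :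
    (1 - (starRingEnd ℂ) w * phiA a z)⁻¹ =
      (1 - (1 - (a:ℂ)) * (starRingEnd ℂ) w)⁻¹ *
      (1 - (starRingEnd ℂ) ((a:ℂ) * w / (1 - (1 - (a:ℂ)) * w)) * z)⁻¹ := by
  set u := (starRingEnd ℂ) w with hu
  have hun : ‖u‖ < 1 := by rwa [hu, RCLike.norm_conj]
  have h1a : ‖(1:ℂ) - (a:ℂ)‖ = 1 - a := by
    rw [show (1:ℂ) - (a:ℂ) = ((1 - a : ℝ) : ℂ) by push_cast; ring,
      Complex.norm_real, Real.norm_eq_abs, _root_.abs_of_nonneg (by linarith)]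
  have hd1 : (1:ℂ) - (1 - (a:ℂ)) * u ≠ 0 := by
    apply one_sub_ne_zero'
    rw [norm_mul, h1a]
    nlinarith [norm_nonneg u]
  have hφ : ‖phiA a z‖ < 1 := by
    have h2 : ‖(a:ℂ) * z‖ = a * ‖z‖ := by
      rw [norm_mul, Complex.norm_real, Real.norm_eq_abs, _root_.abs_of_nonneg ha0.le]
    calc ‖phiA a z‖ = ‖(a:ℂ) * z + (1 - (a:ℂ))‖ := by rw [phiA]; ring_nf
      _ ≤ ‖(a:ℂ) * z‖ + ‖(1:ℂ) - (a:ℂ)‖ := norm_add_le _ _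
      _ = a * ‖z‖ + (1 - a) := by rw [h2, h1a]
      _ < 1 := by nlinarith
  have hd2 : (1:ℂ) - u * phiA a z ≠ 0 := by
    apply one_sub_ne_zero'
    rw [norm_mul]
    nlinarith [norm_nonneg u, norm_nonneg (phiA a z)]
  have hconj : (starRingEnd ℂ) ((a:ℂ) * w / (1 - (1 - (a:ℂ)) * w))
      = (a:ℂ) * u / (1 - (1 - (a:ℂ)) * u) := by
    rw [map_div₀, map_mul]
    simp only [map_sub, map_mul, map_one, Complex.conj_ofReal, ← hu]
  have hfact : (1:ℂ) - u * phiA a z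
      = ((1:ℂ) - (1 - (a:ℂ)) * u) * (1 - ((a:ℂ) * u / (1 - (1 - (a:ℂ)) * u)) * z) := by
    rw [phiA]
    rw [mul_sub (1 - (1 - (a:ℂ)) * u), mul_one, ← mul_assoc, mul_div_cancel₀ _ hd1]
    ring
  rw [hconj, hfact, mul_inv]

/-- If `Θ` is a nonconstant inner function and the model space `(Θ H²)^⊥` is
`C_{φ_a}`-invariant, then `Θ(z₁) ≠ 0` for every `z₁ ∈ 𝔻` with `z₁ ≠ 0`. -/
theorem statement2 (a : ℝ) (ha : a ∈ Set.Ioo (0 : ℝ) 1) (Θ : ℂ → ℂ)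
    (hΘ : IsInnerFn Θ) (hnc : NonconstantOnDisk Θ)
    (hinv : InvariantUnderOp (compOp (phiA a)) (ModelSpace Θ)) :
    ∀ z₁ ∈ ball (0 : ℂ) 1, z₁ ≠ 0 → Θ z₁ ≠ 0 := by
  obtain ⟨ha0, ha1⟩ := ha
  intro z₁ hz₁ hz₁ne hΘz₁
  have hΘd : DifferentiableOn ℂ Θ (ball (0:ℂ) 1) := hΘ.1.1
  set ψ : ℂ → ℂ := fun w => (a:ℂ) * w / (1 - (1 - (a:ℂ)) * w) with hψ
  -- one-step propagation of zeros
  have step : ∀ w ∈ ball (0:ℂ) 1, Θ w = 0 → (ψ w ∈ ball (0:ℂ) 1 ∧ Θ (ψ w) = 0) := by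
    intro w hw h0
    have hwn : ‖w‖ < 1 := norm_lt_one_of_mem_ball hw
    have hmem : ψ w ∈ ball (0:ℂ) 1 :=
      mem_ball_zero_iff.mpr (psi_mem_ball ha0 ha1 hwn)
    refine ⟨hmem, ?_⟩
    have hK := kernel_mem hΘd hw h0
    have hf := hinv _ hK
    have hcn : ‖(starRingEnd ℂ) w‖ < 1 := by rwa [RCLike.norm_conj]
    have h1a : ‖(1:ℂ) - (a:ℂ)‖ = 1 - a := by
      rw [show (1:ℂ) - (a:ℂ) = ((1 - a : ℝ) : ℂ) by push_cast; ring,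
        Complex.norm_real, Real.norm_eq_abs, _root_.abs_of_nonneg (by linarith)]
    have hc : ((1:ℂ) - (1 - (a:ℂ)) * (starRingEnd ℂ) w) ≠ 0 := by
      apply one_sub_ne_zero'
      rw [norm_mul, h1a]
      nlinarith [norm_nonneg ((starRingEnd ℂ) w)]
    refine force_zero hΘd hmem (inv_ne_zero hc) hf ?_
    intro z hz
    have hzn : ‖z‖ < 1 := norm_lt_one_of_mem_ball hz
    have := phi_identity ha0 ha1 hwn hzn
    simpa [compOp, Function.comp, hψ] using this
  -- all iterates are zeros of Θ in the disk
  have iter : ∀ n, ψ^[n] z₁ ∈ ball (0:ℂ) 1 ∧ Θ (ψ^[n] z₁) = 0 := by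
    intro n
    induction n with
    | zero => exact ⟨hz₁, hΘz₁⟩
    | succ n ih =>
      rw [Function.iterate_succ_apply']
      exact step _ ih.1 ih.2
  have hz₁n : ‖z₁‖ < 1 := norm_lt_one_of_mem_ball hz₁
  have hdenom : ∀ b : ℝ, 0 ≤ b → b ≤ 1 → (1 : ℂ) - ((1 - b : ℝ) : ℂ) * z₁ ≠ 0 := by
    intro b hb0 hb1
    apply one_sub_ne_zero'
    rw [norm_mul, Complex.norm_real, Real.norm_eq_abs, _root_.abs_of_nonneg (by linarith)]
    nlinarith [norm_nonneg z₁]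
  have hab : ∀ n : ℕ, (1:ℂ) - (1 - (a:ℂ)^n) * z₁ ≠ 0 := by
    intro n
    have h := hdenom (a ^ n) (by positivity) (pow_le_one₀ ha0.le ha1.le)
    have : ((1 - a ^ n : ℝ) : ℂ) = 1 - (a:ℂ)^n := by push_cast; ring
    rwa [this] at h
  -- closed form for the iterates
  have closed : ∀ n, ψ^[n] z₁ = (a:ℂ)^n * z₁ / (1 - (1 - (a:ℂ)^n) * z₁) := by
    intro n
    induction n with
    | zero => simp
    | succ n ih =>
      have h3 : (1:ℂ) - (1 - (a:ℂ)) * ψ^[n] z₁ ≠ 0 := by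
        apply one_sub_ne_zero'
        have h1a : ‖(1:ℂ) - (a:ℂ)‖ = 1 - a := by
          rw [show (1:ℂ) - (a:ℂ) = ((1 - a : ℝ) : ℂ) by push_cast; ring,
            Complex.norm_real, Real.norm_eq_abs, _root_.abs_of_nonneg (by linarith)]
        have hb := norm_lt_one_of_mem_ball (iter n).1
        rw [norm_mul, h1a]
        nlinarith [norm_nonneg (ψ^[n] z₁)]
      rw [Function.iterate_succ_apply', hψ]
      simp only
      rw [ih] at h3 ⊢
      have key : (1:ℂ) - (1 - (a:ℂ)) * ((a:ℂ)^n * z₁ / (1 - (1 - (a:ℂ)^n) * z₁))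
          = ((1:ℂ) - (1 - (a:ℂ)^(n+1)) * z₁) / (1 - (1 - (a:ℂ)^n) * z₁) := by
        rw [eq_div_iff (hab n), sub_mul, one_mul, mul_assoc, div_mul_cancel₀ _ (hab n)]
        ring
      rw [key, ← mul_div_assoc, div_div_div_comm, div_self (hab n), div_one]
      congr 1
      ring
  -- the iterates are nonzero and tend to 0
  have hne : ∀ n, ψ^[n] z₁ ≠ 0 := by
    intro n
    rw [closed n]
    apply div_ne_zero _ (hab n)
    exact mul_ne_zero (pow_ne_zero _ (by exact_mod_cast ha0.ne')) hz₁ne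
  have hanorm : ‖(a:ℂ)‖ < 1 := by
    rw [Complex.norm_real, Real.norm_eq_abs, _root_.abs_of_nonneg ha0.le]
    exact ha1
  have hpow : Tendsto (fun n : ℕ => (a:ℂ)^n) atTop (𝓝 0) :=
    tendsto_pow_atTop_nhds_zero_of_norm_lt_one hanorm
  have htend : Tendsto (fun n => ψ^[n] z₁) atTop (𝓝 0) := by
    have hnum : Tendsto (fun n : ℕ => (a:ℂ)^n * z₁) atTop (𝓝 ((0:ℂ) * z₁)) :=
      hpow.mul_const z₁
    rw [zero_mul] at hnum
    have h1 : Tendsto (fun n : ℕ => ((1:ℂ) - (a:ℂ)^n) * z₁) atTop (𝓝 (((1:ℂ) - 0) * z₁)) :=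
      (tendsto_const_nhds.sub hpow).mul_const z₁
    rw [sub_zero, one_mul] at h1
    have hden : Tendsto (fun n : ℕ => (1:ℂ) - (1 - (a:ℂ)^n) * z₁) atTop (𝓝 (1 - z₁)) :=
      tendsto_const_nhds.sub h1
    have hne1 : (1:ℂ) - z₁ ≠ 0 := one_sub_ne_zero' hz₁n
    have := hnum.div hden hne1
    rw [zero_div] at this
    exact Tendsto.congr (fun n => (closed n).symm) this
  have htend' : Tendsto (fun n => ψ^[n] z₁) atTop (𝓝[≠] (0:ℂ)) :=
    tendsto_nhdsWithin_of_tendsto_nhds_of_eventually_within _ htend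
      (Filter.Eventually.of_forall hne)
  -- identity theorem: Θ vanishes on the disk
  have hA : AnalyticOnNhd ℂ Θ (ball (0:ℂ) 1) := hΘd.analyticOnNhd isOpen_ball
  have hEqZero : EqOn Θ 0 (ball (0:ℂ) 1) := by
    apply hA.eqOn_zero_of_preconnected_of_frequently_eq_zero
      (convex_ball (0:ℂ) 1).isPreconnected (mem_ball_self one_pos)
    exact htend'.frequently (Filter.Eventually.of_forall (fun n => (iter n).2)).frequently
  obtain ⟨z, hz, w, hw, hzw⟩ := hnc
  exact hzw (by rw [hEqZero hz, hEqZero hw]; rfl)
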